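/- Let X be a nonempty compact Hausdorff space and let (X; f_1, …, f_N) be a point-fibred iterated function system on X with coding map π : I^∞ → X. Then the range A = π(I^∞) is a nonempty compact subset of X and satisfies A = f_1(A) ∪ f_2(A) ∪ ⋯ ∪ f_N(A); that is, the range of the coding map is the unique fixed point of the set map B ↦ ⋃_{i=1}^N f_i(B) on nonempty compact subsets of X. -/

import Mathlib

/-- `seqComp f σ k = f (σ 0) ∘ f (σ 1) ∘ ⋯ ∘ f (σ (k-1))`. -/
def seqComp {X : Type*} {N : ℕ} (f : Fin N → X → X) (σ : ℕ → Fin N) : ℕ → X → X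
  | 0 => id
  | k + 1 => seqComp f σ k ∘ f (σ k)

lemma seqComp_succ' {X : Type*} {N : ℕ} (f : Fin N → X → X) (σ : ℕ → Fin N) (k : ℕ) :
    seqComp f σ (k + 1) = f (σ 0) ∘ seqComp f (fun n => σ (n + 1)) k := by
  induction k generalizing σ with
  | zero => rfl
  | succ k ih =>
    show seqComp f σ (k + 1) ∘ f (σ (k + 1)) = _
    rw [ih]
    rfl

lemma seqComp_continuous {X : Type*} [TopologicalSpace X] {N : ℕ}
    (f : Fin N → X → X) (hf : ∀ i, Continuous (f i)) (σ : ℕ → Fin N) (k : ℕ) :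
    Continuous (seqComp f σ k) := by
  induction k with
  | zero => exact continuous_id
  | succ k ih => exact ih.comp (hf (σ k))

lemma seqComp_congr {X : Type*} {N : ℕ} (f : Fin N → X → X) {σ τ : ℕ → Fin N} {k : ℕ}
    (h : ∀ j < k, σ j = τ j) : seqComp f σ k = seqComp f τ k := by
  induction k with
  | zero => rfl
  | succ k ih =>
    show seqComp f σ k ∘ f (σ k) = seqComp f τ k ∘ f (τ k)
    rw [ih (fun j hj => h j (hj.trans (Nat.lt_succ_self k))), h k (Nat.lt_succ_self k)]

lemma seqComp_antitone {X : Type*} {N : ℕ} (f : Fin N → X → X) (σ : ℕ → Fin N)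
    {S : Set X} (hS : ∀ i, f i '' S ⊆ S) :
    Antitone (fun k => seqComp f σ k '' S) := by
  apply antitone_nat_of_succ_le
  intro k
  show seqComp f (σ) (k + 1) '' S ⊆ seqComp f σ k '' S
  have : seqComp f σ (k + 1) = seqComp f σ k ∘ f (σ k) := rfl
  rw [this, Set.image_comp]
  exact Set.image_mono (hS (σ k))

/-- For a point-fibred IFS, the range `A = π(I^∞)` of the coding map is
nonempty, compact, satisfies `A = f_1(A) ∪ ⋯ ∪ f_N(A)`, and is the unique nonempty
compact set fixed by `B ↦ ⋃ i, f i '' B`. -/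
theorem range_coding_map_is_attractor
    {X : Type*} [TopologicalSpace X] [CompactSpace X] [T2Space X] [Nonempty X]
    {N : ℕ} (hN : 0 < N) (f : Fin N → X → X) (hf : ∀ i, Continuous (f i))
    (π : (ℕ → Fin N) → X)
    (hπ : ∀ σ : ℕ → Fin N,
      (⋂ k : ℕ, seqComp f σ k '' (Set.univ : Set X)) = {π σ}) :
    (Set.range π).Nonempty ∧ IsCompact (Set.range π) ∧
      Set.range π = ⋃ i, f i '' Set.range π ∧
      ∀ B : Set X, B.Nonempty → IsCompact B → B = ⋃ i, f i '' B →
        B = Set.range π := by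
  haveI : NeZero N := ⟨hN.ne'⟩
  letI : TopologicalSpace (Fin N) := ⊥
  haveI : DiscreteTopology (Fin N) := ⟨rfl⟩
  -- membership of π σ in each set
  have hmem : ∀ (σ : ℕ → Fin N) (k : ℕ), π σ ∈ seqComp f σ k '' Set.univ := by
    intro σ k
    have : π σ ∈ ⋂ k : ℕ, seqComp f σ k '' (Set.univ : Set X) := by
      rw [hπ σ]; rfl
    exact Set.mem_iInter.mp this k
  -- shift identity: π σ = f (σ 0) (π (shift σ))
  have hshift : ∀ σ : ℕ → Fin N, π σ = f (σ 0) (π fun n => σ (n + 1)) := by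
    intro σ
    have : f (σ 0) (π fun n => σ (n + 1)) ∈
        ⋂ k : ℕ, seqComp f σ k '' (Set.univ : Set X) := by
      rw [Set.mem_iInter]
      intro k
      cases k with
      | zero => exact Set.mem_image_of_mem _ trivial
      | succ m =>
        rw [seqComp_succ', Set.image_comp]
        exact Set.mem_image_of_mem _ (hmem _ m)
    rw [hπ σ] at this
    exact this.symm
  -- cons identity: f i (π σ) = π (cons i σ)
  have hcons : ∀ (i : Fin N) (σ : ℕ → Fin N),
      f i (π σ) ∈ Set.range π := by
    intro i σ
    set τ : ℕ → Fin N := fun n => Nat.casesOn n i (fun m => σ m) with hτ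
    have h0 : τ 0 = i := rfl
    have hs : (fun n => τ (n + 1)) = σ := rfl
    refine ⟨τ, ?_⟩
    rw [hshift τ, h0, hs]
  -- nonempty
  have hne : (Set.range π).Nonempty := ⟨π (fun _ => ⟨0, hN⟩), Set.mem_range_self _⟩
  refine ⟨hne, ?_, ?_, ?_⟩
  · -- compactness via continuity of π
    have hcont : Continuous π := by
      rw [continuous_iff_continuousAt]
      intro σ
      intro U hU
      rw [Filter.mem_map]
      obtain ⟨U', hU'sub, hU'open, hU'mem⟩ := mem_nhds_iff.mp hU
      -- find k with seqComp f σ k '' univ ⊆ U'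
      have hdir : Directed (· ⊇ ·) (fun k => seqComp f σ k '' (Set.univ : Set X)) :=
        (seqComp_antitone f σ (fun i => Set.subset_univ _)).directed_ge
      have hclosed : ∀ k : ℕ, IsClosed (seqComp f σ k '' (Set.univ : Set X)) :=
        fun k => (isCompact_univ.image (seqComp_continuous f hf σ k)).isClosed
      obtain ⟨k, hk⟩ := exists_subset_nhds_of_compactSpace hdir hclosed
        (U := U') (by
          intro x hx
          rw [hπ σ] at hx
          rw [hx]
          exact hU'open.mem_nhds hU'mem)
      -- the cylinder neighborhood
      have hWopen : IsOpen {τ : ℕ → Fin N | ∀ j : Fin k, τ j = σ j} := by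
        have : {τ : ℕ → Fin N | ∀ j : Fin k, τ j = σ j}
            = ⋂ j : Fin k, (fun τ : ℕ → Fin N => τ j) ⁻¹' {σ j} := by
          ext τ; simp [Set.mem_iInter]
        rw [this]
        exact isOpen_iInter_of_finite fun j =>
          (continuous_apply (j : ℕ)).isOpen_preimage _ (isOpen_discrete _)
      refine Filter.mem_of_superset
        (hWopen.mem_nhds (fun j => rfl)) ?_
      intro τ hτ
      apply hU'sub
      apply hk
      have : seqComp f τ k = seqComp f σ k :=
        seqComp_congr f (fun j hj => hτ ⟨j, hj⟩)
      rw [← this]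
      exact hmem τ k
    exact isCompact_range hcont
  · -- self-similarity
    apply Set.Subset.antisymm
    · rintro _ ⟨σ, rfl⟩
      exact Set.mem_iUnion.mpr ⟨σ 0, _, ⟨_, rfl⟩, (hshift σ).symm⟩
    · rintro x hx
      obtain ⟨i, y, ⟨σ, rfl⟩, rfl⟩ := Set.mem_iUnion.mp hx
      exact hcons i σ
  · -- uniqueness
    intro B hBne hBc hBfix
    apply Set.Subset.antisymm
    · -- B ⊆ range π
      intro x hx
      have hch : ∀ b : B, ∃ (i : Fin N) (y : B), f i y = (b : X) := by
        rintro ⟨b, hb⟩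
        rw [hBfix] at hb
        obtain ⟨i, y, hy, hfy⟩ := Set.mem_iUnion.mp hb
        exact ⟨i, ⟨y, hy⟩, hfy⟩
      choose g y hgy using hch
      set p : ℕ → B := fun k => y^[k] ⟨x, hx⟩ with hp
      set σ : ℕ → Fin N := fun k => g (p k) with hσ
      have key : ∀ k, seqComp f σ k (p k) = x := by
        intro k
        induction k with
        | zero => rfl
        | succ k ih =>
          show seqComp f σ k (f (σ k) (p (k + 1))) = x
          have hpk : (p (k + 1) : X) = y (p k) := by
            simp only [hp, Function.iterate_succ_apply']
          rw [hpk, hgy (p k)]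
          exact ih
      have : x ∈ ⋂ k : ℕ, seqComp f σ k '' (Set.univ : Set X) := by
        rw [Set.mem_iInter]
        intro k
        exact ⟨p k, trivial, key k⟩
      rw [hπ σ] at this
      exact ⟨σ, this.symm⟩
    · -- range π ⊆ B
      rintro _ ⟨σ, rfl⟩
      have himg : ∀ i, f i '' B ⊆ B := by
        intro i
        have h1 := Set.subset_iUnion (fun j => f j '' B) i
        rw [← hBfix] at h1
        exact h1
      have hnested := seqComp_antitone f σ himg
      have hnonempty : (⋂ k : ℕ, seqComp f σ k '' B).Nonempty := by
        apply IsCompact.nonempty_iInter_of_sequence_nonempty_isCompact_isClosed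
        · intro k; exact hnested (Nat.le_succ k)
        · intro k; exact hBne.image _
        · exact hBc.image (seqComp_continuous f hf σ 0)
        · intro k; exact (hBc.image (seqComp_continuous f hf σ k)).isClosed
      obtain ⟨z, hz⟩ := hnonempty
      have hz' : z ∈ ⋂ k : ℕ, seqComp f σ k '' (Set.univ : Set X) := by
        rw [Set.mem_iInter] at hz ⊢
        exact fun k => Set.image_mono (Set.subset_univ B) (hz k)
      rw [hπ σ] at hz'
      rw [← hz']
      obtain ⟨w, hw, hwz⟩ := Set.mem_iInter.mp hz 0
      exact hwz ▸ hw
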